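/- Let m ∈ L¹(ℝ) be continuous, q ∈ ℝ, and suppose m ≤ 0 on [q,∞) and m ≥ 0 on (-∞,q]. Let u = G∗m with G(x)=e^{-|x|}/2. Then ∫_q^∞ e^{-x} (u(x)² - u'(x)²) dx ≥ e^{-q} M I, where M = e^{q}∫_q^∞ e^{-η} m(η) dη and I = e^{-q}∫_{-∞}^q e^{η} m(η) dη; in particular u(q)² - u'(q)² = M I ≤ 0. -/

import Mathlib

open MeasureTheory Set

noncomputable def blowupA (m : ℝ → ℝ) (x : ℝ) : ℝ := ∫ y in Iic x, Real.exp y * m y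

noncomputable def blowupB (m : ℝ → ℝ) (x : ℝ) : ℝ := ∫ y in Ioi x, Real.exp (-y) * m y

lemma blowup_intOn_eA {m : ℝ → ℝ} (hmc : Continuous m) (hm : Integrable m) (x : ℝ) :
    IntegrableOn (fun y => Real.exp y * m y) (Iic x) := by
  refine Integrable.mono' ((hm.norm.const_mul (Real.exp x)).restrict)
    ((Real.continuous_exp.mul hmc).aestronglyMeasurable) ?_
  filter_upwards [ae_restrict_mem measurableSet_Iic] with y (hy : y ≤ x)
  have h1 : ‖Real.exp y * m y‖ = Real.exp y * ‖m y‖ := by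
    rw [norm_mul, Real.norm_eq_abs, abs_of_pos (Real.exp_pos y)]
  rw [h1]
  exact mul_le_mul_of_nonneg_right (Real.exp_le_exp.2 hy) (norm_nonneg _)

lemma blowup_intOn_gB {m : ℝ → ℝ} (hmc : Continuous m) (hm : Integrable m) (x : ℝ) :
    IntegrableOn (fun y => Real.exp (-y) * m y) (Ioi x) := by
  refine Integrable.mono' ((hm.norm.const_mul (Real.exp (-x))).restrict)
    ((Real.continuous_exp.comp continuous_neg).mul hmc).aestronglyMeasurable ?_
  filter_upwards [ae_restrict_mem measurableSet_Ioi] with y (hy : x < y)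
  have h1 : ‖Real.exp (-y) * m y‖ = Real.exp (-y) * ‖m y‖ := by
    rw [norm_mul, Real.norm_eq_abs, abs_of_pos (Real.exp_pos _)]
  rw [h1]
  exact mul_le_mul_of_nonneg_right (Real.exp_le_exp.2 (by linarith)) (norm_nonneg _)

/-- Key convolution estimate of the blow-up proof: if `m ≤ 0` on `[q,∞)` and `m ≥ 0` on
`(-∞,q]`, and `u = G∗m`, then `∫_q^∞ e^{-x}(u² - (u')²) dx ≥ e^{-q} M I`, where
`M = e^q ∫_q^∞ e^{-η} m dη` and `I = e^{-q} ∫_{-∞}^q e^{η} m dη`; in particular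
`u(q)² - u'(q)² = M I ≤ 0`. -/
theorem blowup_convolution_estimate (m : ℝ → ℝ) (hmc : Continuous m) (hm : Integrable m)
    (q : ℝ) (hneg : ∀ x ∈ Ici q, m x ≤ 0) (hpos : ∀ x ∈ Iic q, 0 ≤ m x)
    (u : ℝ → ℝ) (hu : ∀ x : ℝ, u x = ∫ y : ℝ, (Real.exp (-|x - y|) / 2) * m y) :
    (∫ x in Ioi q, Real.exp (-x) * ((u x) ^ 2 - (deriv u x) ^ 2))
        ≥ Real.exp (-q) * ((Real.exp q * ∫ η in Ioi q, Real.exp (-η) * m η)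
          * (Real.exp (-q) * ∫ η in Iio q, Real.exp η * m η)) ∧
    (u q) ^ 2 - (deriv u q) ^ 2
        = (Real.exp q * ∫ η in Ioi q, Real.exp (-η) * m η)
          * (Real.exp (-q) * ∫ η in Iio q, Real.exp η * m η) ∧
    (Real.exp q * ∫ η in Ioi q, Real.exp (-η) * m η)
        * (Real.exp (-q) * ∫ η in Iio q, Real.exp η * m η) ≤ 0 := by
  set A : ℝ → ℝ := blowupA m with hA_def
  set B : ℝ → ℝ := blowupB m with hB_def
  have hInt_eA : ∀ x : ℝ, IntegrableOn (fun y => Real.exp y * m y) (Iic x) :=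
    blowup_intOn_eA hmc hm
  have hInt_gB : ∀ x : ℝ, IntegrableOn (fun y => Real.exp (-y) * m y) (Ioi x) :=
    blowup_intOn_gB hmc hm
  have hceA : Continuous (fun y => Real.exp y * m y) := Real.continuous_exp.mul hmc
  have hcgB : Continuous (fun y => Real.exp (-y) * m y) :=
    (Real.continuous_exp.comp continuous_neg).mul hmc
  -- rewrite the goal's integrals in terms of A and B
  have hBq : (∫ η in Ioi q, Real.exp (-η) * m η) = B q := rfl
  have hAq : (∫ η in Iio q, Real.exp η * m η) = A q := by
    rw [hA_def, blowupA, integral_Iic_eq_integral_Iio]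
  -- representation of u
  have hurep : ∀ x : ℝ, u x = Real.exp (-x) / 2 * A x + Real.exp x / 2 * B x := by
    intro x
    have hker : Integrable (fun y => Real.exp (-|x - y|) / 2 * m y) := by
      refine Integrable.mono' (hm.norm.const_mul (1 / 2))
        (((Real.continuous_exp.comp ((continuous_const.sub continuous_id).abs.neg)).div_const
          2).mul hmc).aestronglyMeasurable ?_
      filter_upwards with y
      have h1 : ‖Real.exp (-|x - y|) / 2 * m y‖ = Real.exp (-|x - y|) / 2 * ‖m y‖ := by
        rw [norm_mul, Real.norm_eq_abs, abs_of_pos (by positivity)]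
      rw [h1]
      have h2 : Real.exp (-|x - y|) ≤ 1 := Real.exp_le_one_iff.2 (neg_nonpos.2 (abs_nonneg _))
      have := norm_nonneg (m y)
      nlinarith
    have hsplit := intervalIntegral.integral_Iic_add_Ioi (b := x) hker.integrableOn hker.integrableOn
    have h1 : (∫ y in Iic x, Real.exp (-|x - y|) / 2 * m y)
        = Real.exp (-x) / 2 * A x := by
      rw [hA_def, blowupA, ← integral_const_mul]
      refine setIntegral_congr_fun measurableSet_Iic fun y (hy : y ≤ x) => ?_
      have habs : |x - y| = x - y := abs_of_nonneg (by linarith)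
      have hexp : Real.exp (-(x - y)) = Real.exp (-x) * Real.exp y := by
        rw [← Real.exp_add]; ring_nf
      rw [habs, hexp]; ring
    have h2 : (∫ y in Ioi x, Real.exp (-|x - y|) / 2 * m y)
        = Real.exp x / 2 * B x := by
      rw [hB_def, blowupB, ← integral_const_mul]
      refine setIntegral_congr_fun measurableSet_Ioi fun y (hy : x < y) => ?_
      have habs : |x - y| = y - x := by
        rw [abs_of_nonpos (by linarith)]; ring
      have hexp : Real.exp (-(y - x)) = Real.exp x * Real.exp (-y) := by
        rw [← Real.exp_add]; ring_nf
      rw [habs, hexp]; ring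
    rw [hu x, ← hsplit, h1, h2]
  -- derivative of A
  have hA_deriv : ∀ x : ℝ, HasDerivAt A (Real.exp x * m x) x := by
    intro x
    have hFTC : HasDerivAt (fun t => ∫ s in (0:ℝ)..t, Real.exp s * m s)
        (Real.exp x * m x) x :=
      intervalIntegral.integral_hasDerivAt_right (hceA.intervalIntegrable 0 x)
        (hceA.stronglyMeasurableAtFilter _ _) hceA.continuousAt
    have hAeq : A = fun t => A 0 + ∫ s in (0:ℝ)..t, Real.exp s * m s := by
      funext t
      have h := intervalIntegral.integral_Iic_sub_Iic (μ := volume) (f := fun y => Real.exp y * m y)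
        (hInt_eA 0) (hInt_eA t)
      simp only [hA_def, blowupA]
      rw [← h]; ring
    rw [hAeq]
    exact hFTC.const_add (A 0)
  -- difference formula for B
  have hB_sub : ∀ a b : ℝ, a ≤ b → B a - B b = ∫ y in Ioc a b, Real.exp (-y) * m y := by
    intro a b hab
    have hdisj : Disjoint (Ioc a b) (Ioi b) := Ioc_disjoint_Ioi le_rfl
    have h := setIntegral_union (f := fun y => Real.exp (-y) * m y) (μ := volume) hdisj
      measurableSet_Ioi ((hInt_gB a).mono_set Ioc_subset_Ioi_self) (hInt_gB b)
    rw [Ioc_union_Ioi_eq_Ioi hab] at h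
    simp only [hB_def, blowupB]
    rw [h]; ring
  -- derivative of B
  have hB_deriv : ∀ x : ℝ, HasDerivAt B (-(Real.exp (-x) * m x)) x := by
    intro x
    have hc : x - 1 < x := by linarith
    have hFTC : HasDerivAt (fun t => B (x - 1) - ∫ s in (x-1)..t, Real.exp (-s) * m s)
        (-(Real.exp (-x) * m x)) x :=
      (intervalIntegral.integral_hasDerivAt_right (hcgB.intervalIntegrable _ _)
        (hcgB.stronglyMeasurableAtFilter _ _) hcgB.continuousAt).const_sub (B (x - 1))
    refine hFTC.congr_of_eventuallyEq ?_
    filter_upwards [Ioi_mem_nhds hc] with t (ht : x - 1 < t)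
    rw [intervalIntegral.integral_of_le ht.le]
    have h := hB_sub (x - 1) t ht.le
    linarith
  -- derivative of u
  have hu_deriv : ∀ x : ℝ, HasDerivAt u
      ((Real.exp x * B x - Real.exp (-x) * A x) / 2) x := by
    intro x
    have hufun : u = fun t => Real.exp (-t) / 2 * A t + Real.exp t / 2 * B t :=
      funext hurep
    have h1 : HasDerivAt (fun t : ℝ => Real.exp (-t)) (-Real.exp (-x)) x := by
      simpa using (hasDerivAt_id x).neg.exp
    have h2 : HasDerivAt Real.exp (Real.exp x) x := Real.hasDerivAt_exp x
    have H : HasDerivAt (fun t => Real.exp (-t) / 2 * A t + Real.exp t / 2 * B t)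
        (-Real.exp (-x) / 2 * A x + Real.exp (-x) / 2 * (Real.exp x * m x) +
          (Real.exp x / 2 * B x + Real.exp x / 2 * -(Real.exp (-x) * m x))) x :=
      ((h1.div_const 2).mul (hA_deriv x)).add ((h2.div_const 2).mul (hB_deriv x))
    rw [hufun]
    convert H using 1
    ring
  have hderiv_eq : ∀ x : ℝ, deriv u x = (Real.exp x * B x - Real.exp (-x) * A x) / 2 :=
    fun x => (hu_deriv x).deriv
  -- key algebraic identity
  have hid : ∀ x : ℝ, (u x) ^ 2 - (deriv u x) ^ 2 = A x * B x := by
    intro x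
    have hxx : Real.exp (-x) * Real.exp x = 1 := by
      rw [← Real.exp_add]; simp
    rw [hurep x, hderiv_eq x]
    calc (Real.exp (-x) / 2 * A x + Real.exp x / 2 * B x) ^ 2
          - ((Real.exp x * B x - Real.exp (-x) * A x) / 2) ^ 2
        = (Real.exp (-x) * Real.exp x) * (A x * B x) := by ring
      _ = A x * B x := by rw [hxx, one_mul]
  -- sign and monotonicity facts
  have hA0 : 0 ≤ A q := by
    rw [hA_def, blowupA]
    exact setIntegral_nonneg measurableSet_Iic fun y hy =>
      mul_nonneg (Real.exp_pos y).le (hpos y hy)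
  have hBle0 : ∀ x : ℝ, q ≤ x → B x ≤ 0 := by
    intro x hx
    rw [hB_def, blowupB]
    refine setIntegral_nonpos measurableSet_Ioi fun y (hy : x < y) => ?_
    have hmy : m y ≤ 0 := hneg y (by simp only [mem_Ici]; linarith)
    exact mul_nonpos_iff.2 (Or.inl ⟨(Real.exp_pos _).le, hmy⟩)
  have hAle : ∀ x : ℝ, q ≤ x → A x ≤ A q := by
    intro x hx
    have h := intervalIntegral.integral_Iic_sub_Iic (μ := volume) (f := fun y => Real.exp y * m y)
      (hInt_eA q) (hInt_eA x)
    have h2 : (0:ℝ) ≤ ∫ s in q..x, -(Real.exp s * m s) := by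
      refine intervalIntegral.integral_nonneg hx fun s hs => ?_
      have hms : m s ≤ 0 := hneg s (by simp only [mem_Ici]; exact hs.1)
      nlinarith [Real.exp_pos s]
    rw [intervalIntegral.integral_neg] at h2
    have h3 : (∫ s in q..x, Real.exp s * m s) ≤ 0 := by linarith
    have hAx : A x = ∫ y in Iic x, Real.exp y * m y := rfl
    have hAq' : A q = ∫ y in Iic q, Real.exp y * m y := rfl
    linarith [h, h3, hAx, hAq']
  have hBge : ∀ x : ℝ, q ≤ x → B q ≤ B x := by
    intro x hx
    have h := hB_sub q x hx
    have h2 : (∫ y in Ioc q x, Real.exp (-y) * m y) ≤ 0 := by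
      refine setIntegral_nonpos measurableSet_Ioc fun y hy => ?_
      have hmy : m y ≤ 0 := hneg y (by simp only [mem_Ici]; linarith [hy.1])
      exact mul_nonpos_iff.2 (Or.inl ⟨(Real.exp_pos _).le, hmy⟩)
    linarith
  -- pointwise estimate
  have hpoint : ∀ x ∈ Ioi q, A q * B q ≤ A x * B x := by
    intro x hx
    have hx' : q ≤ x := le_of_lt hx
    have t1 : 0 ≤ A q * (B x - B q) := mul_nonneg hA0 (by linarith [hBge x hx'])
    have t2 : (A q - A x) * B x ≤ 0 :=
      mul_nonpos_iff.2 (Or.inl ⟨by linarith [hAle x hx'], hBle0 x hx'⟩)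
    nlinarith [t1, t2]
  -- continuity of A and B
  have hAcont : Continuous A := by
    have : Differentiable ℝ A := fun x => (hA_deriv x).differentiableAt
    exact this.continuous
  have hBcont : Continuous B := by
    have : Differentiable ℝ B := fun x => (hB_deriv x).differentiableAt
    exact this.continuous
  -- bounds on A and B
  set C : ℝ := ∫ y, ‖m y‖ with hC_def
  have hC0 : 0 ≤ C := integral_nonneg fun y => norm_nonneg _
  have hAbound : ∀ x : ℝ, ‖A x‖ ≤ Real.exp x * C := by
    intro x
    calc ‖A x‖ ≤ ∫ y in Iic x, ‖Real.exp y * m y‖ := norm_integral_le_integral_norm _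
      _ ≤ ∫ y in Iic x, Real.exp x * ‖m y‖ := by
          refine setIntegral_mono_on ((hInt_eA x).norm) ((hm.norm.const_mul _).restrict)
            measurableSet_Iic fun y (hy : y ≤ x) => ?_
          rw [norm_mul, Real.norm_eq_abs, abs_of_pos (Real.exp_pos y)]
          exact mul_le_mul_of_nonneg_right (Real.exp_le_exp.2 hy) (norm_nonneg _)
      _ ≤ ∫ y, Real.exp x * ‖m y‖ := by
          refine setIntegral_le_integral (hm.norm.const_mul _) ?_
          filter_upwards with y
          exact mul_nonneg (Real.exp_pos x).le (norm_nonneg _)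
      _ = Real.exp x * C := by rw [integral_const_mul]
  have hBbound : ∀ x : ℝ, ‖B x‖ ≤ Real.exp (-x) * C := by
    intro x
    calc ‖B x‖ ≤ ∫ y in Ioi x, ‖Real.exp (-y) * m y‖ := norm_integral_le_integral_norm _
      _ ≤ ∫ y in Ioi x, Real.exp (-x) * ‖m y‖ := by
          refine setIntegral_mono_on ((hInt_gB x).norm) ((hm.norm.const_mul _).restrict)
            measurableSet_Ioi fun y (hy : x < y) => ?_
          rw [norm_mul, Real.norm_eq_abs, abs_of_pos (Real.exp_pos _)]
          exact mul_le_mul_of_nonneg_right (Real.exp_le_exp.2 (by linarith)) (norm_nonneg _)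
      _ ≤ ∫ y, Real.exp (-x) * ‖m y‖ := by
          refine setIntegral_le_integral (hm.norm.const_mul _) ?_
          filter_upwards with y
          exact mul_nonneg (Real.exp_pos _).le (norm_nonneg _)
      _ = Real.exp (-x) * C := by rw [integral_const_mul]
  -- integrability of e^{-q} on Ioi q
  have hexpInt : IntegrableOn (fun x => Real.exp (-x)) (Ioi q) := by
    have h := exp_neg_integrableOn_Ioi q (b := 1) one_pos
    simpa using h
  -- integrability of the main integrand
  have hIntMain : IntegrableOn (fun x => Real.exp (-x) * (A x * B x)) (Ioi q) := by
    refine Integrable.mono' ((hexpInt.const_mul (C ^ 2)))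
      (((Real.continuous_exp.comp continuous_neg).mul
        (hAcont.mul hBcont)).aestronglyMeasurable) ?_
    filter_upwards with x
    have h1 := hAbound x
    have h2 := hBbound x
    have hxx : Real.exp x * Real.exp (-x) = 1 := by rw [← Real.exp_add]; simp
    have hnorm : ‖Real.exp (-x) * (A x * B x)‖
        = Real.exp (-x) * (‖A x‖ * ‖B x‖) := by
      rw [norm_mul, norm_mul, Real.norm_eq_abs, abs_of_pos (Real.exp_pos _)]
    rw [hnorm]
    have hstep : ‖A x‖ * ‖B x‖ ≤ (Real.exp x * C) * (Real.exp (-x) * C) :=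
      mul_le_mul h1 h2 (norm_nonneg _) (by positivity)
    have hfin : Real.exp (-x) * ((Real.exp x * C) * (Real.exp (-x) * C))
        = C ^ 2 * Real.exp (-x) := by
      calc Real.exp (-x) * ((Real.exp x * C) * (Real.exp (-x) * C))
          = (Real.exp x * Real.exp (-x)) * (C ^ 2 * Real.exp (-x)) := by ring
        _ = C ^ 2 * Real.exp (-x) := by rw [hxx, one_mul]
    calc Real.exp (-x) * (‖A x‖ * ‖B x‖)
        ≤ Real.exp (-x) * ((Real.exp x * C) * (Real.exp (-x) * C)) :=
          mul_le_mul_of_nonneg_left hstep (Real.exp_pos _).le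
      _ = C ^ 2 * Real.exp (-x) := hfin
  -- rewrite the main integral
  have hmain : (∫ x in Ioi q, Real.exp (-x) * ((u x) ^ 2 - (deriv u x) ^ 2))
      = ∫ x in Ioi q, Real.exp (-x) * (A x * B x) := by
    have : (fun x => Real.exp (-x) * ((u x) ^ 2 - (deriv u x) ^ 2))
        = fun x => Real.exp (-x) * (A x * B x) := funext fun x => by rw [hid x]
    rw [this]
  -- the integral inequality
  have hlowInt : IntegrableOn (fun x => Real.exp (-x) * (A q * B q)) (Ioi q) :=
    hexpInt.mul_const _
  have hge : (∫ x in Ioi q, Real.exp (-x) * (A q * B q))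
      ≤ ∫ x in Ioi q, Real.exp (-x) * (A x * B x) := by
    refine setIntegral_mono_on hlowInt hIntMain measurableSet_Ioi fun x hx => ?_
    exact mul_le_mul_of_nonneg_left (hpoint x hx) (Real.exp_pos _).le
  have hval : (∫ x in Ioi q, Real.exp (-x) * (A q * B q))
      = Real.exp (-q) * (A q * B q) := by
    rw [integral_mul_const, integral_exp_neg_Ioi]
  have hqq : Real.exp q * Real.exp (-q) = 1 := by rw [← Real.exp_add]; simp
  refine ⟨?_, ?_, ?_⟩
  · rw [hBq, hAq, hmain]
    have hrhs : Real.exp (-q) * ((Real.exp q * B q) * (Real.exp (-q) * A q))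
        = Real.exp (-q) * (A q * B q) := by
      calc Real.exp (-q) * ((Real.exp q * B q) * (Real.exp (-q) * A q))
          = (Real.exp q * Real.exp (-q)) * (Real.exp (-q) * (A q * B q)) := by ring
        _ = Real.exp (-q) * (A q * B q) := by rw [hqq, one_mul]
    rw [hrhs, ← hval]
    exact hge
  · rw [hBq, hAq, hid q]
    calc A q * B q = (Real.exp q * Real.exp (-q)) * (A q * B q) := by rw [hqq, one_mul]
      _ = (Real.exp q * B q) * (Real.exp (-q) * A q) := by ring
  · rw [hBq, hAq]
    have h1 : Real.exp q * B q ≤ 0 :=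
      mul_nonpos_iff.2 (Or.inl ⟨(Real.exp_pos _).le, hBle0 q le_rfl⟩)
    have h2 : 0 ≤ Real.exp (-q) * A q := mul_nonneg (Real.exp_pos _).le hA0
    exact mul_nonpos_iff.2 (Or.inr ⟨h1, h2⟩)
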